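/- (Lemma 2.2.) For every k ≥ 1, the function g_k : (Fin k → ZMod 12) → ZMod 12, defined by g_k x = 4 if x 0 is odd and x i ∈ {0,4,8} for all i ≠ 0, and g_k x = 0 otherwise, is a term operation of L, i.e., g_k ∈ Clo_k(L). -/

import Mathlib

/-- The natural projection `ZMod 12 → ZMod 4`. -/
def pi4 : ZMod 12 →+* ZMod 4 := ZMod.castHom (show (4:ℕ) ∣ 12 by norm_num) (ZMod 4)

/-- The cocycle `t` of Vaughan–Lee's loop. -/
def t (x y : ZMod 12) : ZMod 12 :=
  if (pi4 x = 1 ∧ pi4 y = 3) ∨ (pi4 x = 3 ∧ pi4 y = 1) then 4 else 0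

/-- The multiplication of Vaughan–Lee's loop `L`. -/
def mulL (x y : ZMod 12) : ZMod 12 := x + y + t x y

/-- `InClo k h` means `h` is a `k`-ary term function of `L`:
`h` lies in the closure of the projections under the pointwise loop operation. -/
inductive InClo (k : ℕ) : ((Fin k → ZMod 12) → ZMod 12) → Prop
  | proj (i : Fin k) : InClo k (fun x => x i)
  | mul {g h : (Fin k → ZMod 12) → ZMod 12} :
      InClo k g → InClo k h → InClo k (fun x => mulL (g x) (h x))

open scoped Classical in
/-- The function `g_{k+1}` of Lemma 2.2: it takes value `4` exactly when the first
coordinate is odd and all other coordinates lie in `C = {0,4,8}`. -/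
noncomputable def gfun (k : ℕ) : (Fin (k + 1) → ZMod 12) → ZMod 12 := fun x =>
  if Odd (x 0) ∧ ∀ i, i ≠ 0 → x i ∈ ({0, 4, 8} : Set (ZMod 12)) then 4 else 0

namespace VL

/-- 0/1 indicator (in `ZMod 12`) of the cocycle condition on shadows. -/
def ind4 (u v : ZMod 4) : ZMod 12 := if (u = 1 ∧ v = 3) ∨ (u = 3 ∧ v = 1) then 1 else 0

lemma t_eq (a b : ZMod 12) : t a b = 4 * ind4 (pi4 a) (pi4 b) := by
  unfold t ind4; split <;> simp

lemma transport {n : ℕ} {f g : (Fin n → ZMod 12) → ZMod 12} (h : InClo n f)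
    (e : ∀ x, f x = g x) : InClo n g := (funext e : f = g) ▸ h

lemma mul' {n : ℕ} {f g : (Fin n → ZMod 12) → ZMod 12} (hf : InClo n f) (hg : InClo n g) :
    InClo n (fun x => f x + g x + 4 * ind4 (pi4 (f x)) (pi4 (g x))) :=
  transport (InClo.mul hf hg) (fun x => by rw [mulL, t_eq])

/-- the admissible leaf coefficients -/
def okJ (j : ℕ) : Prop := j = 0 ∨ j = 1 ∨ j = 2 ∨ j = 3 ∨ j = 4 ∨ j = 8

lemma leaf {n : ℕ} (i : Fin n) {j : ℕ} (hj : okJ j) :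
    InClo n (fun x => (j : ZMod 12) * x i) := by
  have l1 : InClo n (fun x => (1 : ZMod 12) * x i) :=
    transport (InClo.proj i) (fun x => by ring)
  have e1 : ∀ u : ZMod 4, ind4 u u = 0 := by decide
  have l2 : InClo n (fun x => (2 : ZMod 12) * x i) := by
    refine transport (mul' l1 l1) (fun x => ?_)
    rw [e1]; ring
  have e2 : ∀ u : ZMod 4, ind4 (1 * u) (2 * u) = 0 := by decide
  have l3 : InClo n (fun x => (3 : ZMod 12) * x i) := by
    refine transport (mul' l1 l2) (fun x => ?_)
    rw [map_mul, map_mul, show pi4 (1 : ZMod 12) = 1 by decide,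
      show pi4 (2 : ZMod 12) = 2 by decide, e2]; ring
  have e3 : ∀ u : ZMod 4, ind4 (2 * u) (2 * u) = 0 := by decide
  have l4 : InClo n (fun x => (4 : ZMod 12) * x i) := by
    refine transport (mul' l2 l2) (fun x => ?_)
    rw [map_mul, show pi4 (2 : ZMod 12) = 2 by decide, e3]; ring
  have e4 : ∀ u : ZMod 4, ind4 (4 * u) (4 * u) = 0 := by decide
  have l8 : InClo n (fun x => (8 : ZMod 12) * x i) := by
    refine transport (mul' l4 l4) (fun x => ?_)
    rw [map_mul, show pi4 (4 : ZMod 12) = 4 by decide, e4]; ring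
  have e5 : ∀ u : ZMod 4, ind4 (4 * u) (8 * u) = 0 := by decide
  have l0 : InClo n (fun x => (0 : ZMod 12) * x i) := by
    refine transport (mul' l4 l8) (fun x => ?_)
    rw [map_mul, map_mul, show pi4 (4 : ZMod 12) = 4 by decide,
      show pi4 (8 : ZMod 12) = 8 by decide, e5]
    ring_nf
    rw [show (12 : ZMod 12) = 0 by decide]
    ring
  rcases hj with h|h|h|h|h|h <;> subst h <;> push_cast <;> first
    | exact l0 | exact l1 | exact l2 | exact l3 | exact l4 | exact l8

end VL

namespace VL

variable {n : ℕ}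

/-- shadow of a point -/
def sh (x : Fin n → ZMod 12) : Fin n → ZMod 4 := fun i => pi4 (x i)

/-- linear value of a chain of leaves -/
def chLin (s : List (Fin n × ℕ)) (x : Fin n → ZMod 12) : ZMod 12 :=
  (s.map (fun p => (p.2 : ZMod 12) * x p.1)).sum

/-- mod-4 shadow of a chain -/
def chSh (s : List (Fin n × ℕ)) (a : Fin n → ZMod 4) : ZMod 4 :=
  (s.map (fun p => (p.2 : ZMod 4) * a p.1)).sum

/-- accumulated cocycle indicators along a chain started with running shadow `u` -/
def chChi (a : Fin n → ZMod 4) : List (Fin n × ℕ) → ZMod 4 → ZMod 12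
  | [], _ => 0
  | p :: r, u => ind4 u ((p.2 : ZMod 4) * a p.1) + chChi a r (u + (p.2 : ZMod 4) * a p.1)

@[simp] lemma chLin_nil (x : Fin n → ZMod 12) : chLin [] x = 0 := rfl
@[simp] lemma chLin_cons (p : Fin n × ℕ) (s) (x : Fin n → ZMod 12) :
    chLin (p :: s) x = (p.2 : ZMod 12) * x p.1 + chLin s x := rfl
@[simp] lemma chSh_nil (a : Fin n → ZMod 4) : chSh [] a = 0 := rfl
@[simp] lemma chSh_cons (p : Fin n × ℕ) (s) (a : Fin n → ZMod 4) :
    chSh (p :: s) a = (p.2 : ZMod 4) * a p.1 + chSh s a := rfl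
@[simp] lemma chChi_nil (a : Fin n → ZMod 4) (u : ZMod 4) : chChi a [] u = 0 := rfl
@[simp] lemma chChi_cons (a : Fin n → ZMod 4) (p : Fin n × ℕ) (s) (u : ZMod 4) :
    chChi a (p :: s) u
      = ind4 u ((p.2 : ZMod 4) * a p.1) + chChi a s (u + (p.2 : ZMod 4) * a p.1) := rfl

lemma chLin_append (s t : List (Fin n × ℕ)) (x : Fin n → ZMod 12) :
    chLin (s ++ t) x = chLin s x + chLin t x := by
  induction s with
  | nil => simp
  | cons p r ih => simp [ih]; ring

lemma chSh_append (s t : List (Fin n × ℕ)) (a : Fin n → ZMod 4) :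
    chSh (s ++ t) a = chSh s a + chSh t a := by
  induction s with
  | nil => simp
  | cons p r ih => simp [ih]; ring

lemma chChi_append (s t : List (Fin n × ℕ)) (a : Fin n → ZMod 4) (u : ZMod 4) :
    chChi a (s ++ t) u = chChi a s u + chChi a t (u + chSh s a) := by
  induction s generalizing u with
  | nil => simp
  | cons p r ih => simp [ih, add_assoc]

lemma pi4_shape (A C : ZMod 12) : pi4 (A + 4 * C) = pi4 A := by
  rw [map_add, map_mul, show pi4 (4 : ZMod 12) = 0 by decide, zero_mul, add_zero]

/-- THE chain lemma: extending a term in canonical shape by a chain of leaves. -/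
lemma chain (s : List (Fin n × ℕ)) (hs : ∀ p ∈ s, okJ p.2)
    {V A C : (Fin n → ZMod 12) → ZMod 12} {S : (Fin n → ZMod 4) → ZMod 4}
    (hV : InClo n V) (hval : ∀ x, V x = A x + 4 * C x)
    (hsh : ∀ x, pi4 (A x) = S (sh x)) :
    InClo n (fun x => (A x + chLin s x) + 4 * (C x + chChi (sh x) s (S (sh x)))) := by
  induction s generalizing V A C S with
  | nil =>
    refine transport hV (fun x => ?_)
    simp [hval x]
  | cons p r ih =>
    have hleaf : InClo n (fun x => ((p.2 : ℕ) : ZMod 12) * x p.1) :=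
      leaf p.1 (hs p List.mem_cons_self)
    have hV' : InClo n (fun x => V x + (p.2 : ZMod 12) * x p.1
        + 4 * ind4 (S (sh x)) ((p.2 : ZMod 4) * sh x p.1)) := by
      refine transport (mul' hV hleaf) (fun x => ?_)
      have h1 : pi4 (V x) = S (sh x) := by rw [hval x, pi4_shape, hsh x]
      have h2 : pi4 ((p.2 : ZMod 12) * x p.1) = (p.2 : ZMod 4) * sh x p.1 := by
        rw [map_mul, map_natCast]; rfl
      rw [h1, h2]
    have hval' : ∀ x, (V x + (p.2 : ZMod 12) * x p.1
        + 4 * ind4 (S (sh x)) ((p.2 : ZMod 4) * sh x p.1))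
        = (A x + (p.2 : ZMod 12) * x p.1)
          + 4 * (C x + ind4 (S (sh x)) ((p.2 : ZMod 4) * sh x p.1)) := by
      intro x; rw [hval x]; ring
    have hsh' : ∀ x, pi4 (A x + (p.2 : ZMod 12) * x p.1)
        = S (sh x) + (p.2 : ZMod 4) * sh x p.1 := by
      intro x
      rw [map_add, hsh x, map_mul, map_natCast]; rfl
    have := ih (S := fun a => S a + (p.2 : ZMod 4) * a p.1) (fun q hq => hs q (List.mem_cons_of_mem _ hq)) hV' hval' hsh'
    refine transport this (fun x => ?_)
    simp only [chLin_cons, chChi_cons]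
    ring

end VL

namespace VL

variable {k : ℕ}

def dot (c : Fin k → ZMod 4) (a : Fin (k+1) → ZMod 4) : ZMod 4 := ∑ i, c i * a i.succ

def entL (c : Fin k → ZMod 4) : List (Fin (k+1) × ℕ) :=
  (List.finRange k).map (fun i => (i.succ, (c i).val))

def lvL (c : Fin k → ZMod 4) : List (Fin (k+1) × ℕ) :=
  (List.finRange k).map (fun i => (i.succ, 4 - (c i).val))

def loopL : List (Fin (k+1) × ℕ) := [((0 : Fin (k+1)), 1), ((0 : Fin (k+1)), 3)]

lemma val_lt4 (c : ZMod 4) : (c : ZMod 4).val < 4 := ZMod.val_lt c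

lemma entL_ok (c : Fin k → ZMod 4) : ∀ p ∈ entL c, okJ p.2 := by
  intro p hp
  simp only [entL, List.mem_map] at hp
  obtain ⟨i, _, rfl⟩ := hp
  have := val_lt4 (c i)
  unfold okJ; omega

lemma lvL_ok (c : Fin k → ZMod 4) : ∀ p ∈ lvL c, okJ p.2 := by
  intro p hp
  simp only [lvL, List.mem_map] at hp
  obtain ⟨i, _, rfl⟩ := hp
  have := val_lt4 (c i)
  unfold okJ; omega

lemma loopL_ok : ∀ p ∈ (loopL (k := k)), okJ p.2 := by
  intro p hp
  simp only [loopL, List.mem_cons, List.mem_singleton] at hp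
  rcases hp with rfl | rfl | h
  · unfold okJ; omega
  · unfold okJ; omega
  · cases h

lemma sum_finRange_map {M : Type*} [AddCommMonoid M] (f : Fin k → M) :
    ((List.finRange k).map f).sum = ∑ i, f i := (Fin.sum_univ_def f).symm

lemma chSh_entL (c : Fin k → ZMod 4) (a : Fin (k+1) → ZMod 4) :
    chSh (entL c) a = dot c a := by
  unfold chSh entL dot
  rw [List.map_map]
  rw [show ((fun p : Fin (k+1) × ℕ => (p.2 : ZMod 4) * a p.1) ∘ fun i : Fin k => (i.succ, (c i).val))
      = fun i : Fin k => (((c i).val : ZMod 4)) * a i.succ from rfl]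
  rw [sum_finRange_map]
  congr 1; funext i
  rw [ZMod.natCast_val, ZMod.cast_id]

lemma chSh_lvL (c : Fin k → ZMod 4) (a : Fin (k+1) → ZMod 4) :
    chSh (lvL c) a = - dot c a := by
  unfold chSh lvL dot
  rw [List.map_map]
  rw [show ((fun p : Fin (k+1) × ℕ => (p.2 : ZMod 4) * a p.1)
      ∘ fun i : Fin k => (i.succ, 4 - (c i).val))
      = fun i : Fin k => (((4 - (c i).val : ℕ) : ZMod 4)) * a i.succ from rfl]
  rw [sum_finRange_map, ← Finset.sum_neg_distrib]
  congr 1; funext i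
  have hle : (c i).val ≤ 4 := le_of_lt (val_lt4 (c i))
  rw [Nat.cast_sub hle]
  rw [show ((4:ℕ) : ZMod 4) = 0 by decide, ZMod.natCast_val, ZMod.cast_id]
  ring

end VL

namespace VL

variable {k : ℕ}

def mains (c : Fin k → ZMod 4) (a : Fin (k+1) → ZMod 4) : ZMod 12 :=
  ind4 (dot c a) (a 0) + ind4 (dot c a + a 0) (3 * a 0)

def chi1 (c : Fin k → ZMod 4) (a : Fin (k+1) → ZMod 4) : ZMod 12 :=
  chChi a (entL c) 0 + mains c a + chChi a (lvL c) (dot c a)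

def chi2 (c : Fin k → ZMod 4) (a : Fin (k+1) → ZMod 4) : ZMod 12 :=
  chChi a (entL c) 0 + chChi a (lvL c) (dot c a)

lemma chLin_ent_lv (c : Fin k → ZMod 4) (x : Fin (k+1) → ZMod 12) :
    chLin (entL c) x + chLin (lvL c) x = ∑ i : Fin k, (4 : ZMod 12) * x i.succ := by
  unfold chLin entL lvL
  rw [List.map_map, List.map_map]
  rw [show ((fun p : Fin (k+1) × ℕ => (p.2 : ZMod 12) * x p.1) ∘ fun i : Fin k => (i.succ, (c i).val))
      = fun i : Fin k => (((c i).val : ℕ) : ZMod 12) * x i.succ from rfl]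
  rw [show ((fun p : Fin (k+1) × ℕ => (p.2 : ZMod 12) * x p.1)
      ∘ fun i : Fin k => (i.succ, 4 - (c i).val))
      = fun i : Fin k => (((4 - (c i).val : ℕ) : ZMod 12)) * x i.succ from rfl]
  rw [sum_finRange_map, sum_finRange_map, ← Finset.sum_add_distrib]
  congr 1; funext i
  have hle : (c i).val ≤ 4 := le_of_lt (val_lt4 (c i))
  rw [← add_mul, ← Nat.cast_add, Nat.add_sub_cancel' hle]
  norm_num

lemma chLin_loopL (x : Fin (k+1) → ZMod 12) : chLin loopL x = 4 * x 0 := by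
  simp [chLin, loopL]
  ring

lemma chSh_loopL (a : Fin (k+1) → ZMod 4) : chSh loopL a = 0 := by
  have h : ∀ v : ZMod 4, (1 : ZMod 4) * v + ((3 : ZMod 4) * v + 0) = 0 := by decide
  simpa [chSh, loopL] using h (a 0)

lemma chChi_loopL (a : Fin (k+1) → ZMod 4) (u : ZMod 4) :
    chChi a loopL u = ind4 u (a 0) + ind4 (u + a 0) (3 * a 0) := by
  simp [chChi, loopL]

/-- value added by one segment (with `x0`-loop): `4·x0 + Σ 4·x_{i+1}` -/
def segLin (x : Fin (k+1) → ZMod 12) : ZMod 12 := ∑ i : Fin k, (4 : ZMod 12) * x i.succ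

end VL

namespace VL
variable {k : ℕ}

lemma chLin_seg1 (c : Fin k → ZMod 4) (x : Fin (k+1) → ZMod 12) :
    chLin (entL c ++ (loopL ++ lvL c)) x = 4 * x 0 + segLin x := by
  rw [chLin_append, chLin_append, chLin_loopL]
  have h := chLin_ent_lv c x
  unfold segLin
  linear_combination h

lemma chChi_seg1 (c : Fin k → ZMod 4) (a : Fin (k+1) → ZMod 4) :
    chChi a (entL c ++ (loopL ++ lvL c)) 0 = chi1 c a := by
  rw [chChi_append, chChi_append, chChi_loopL, chSh_entL, chSh_loopL, zero_add, add_zero]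
  unfold chi1 mains
  ring

lemma chLin_seg2 (c : Fin k → ZMod 4) (x : Fin (k+1) → ZMod 12) :
    chLin (entL c ++ lvL c) x = segLin x := by
  rw [chLin_append]
  exact chLin_ent_lv c x

lemma chChi_seg2 (c : Fin k → ZMod 4) (a : Fin (k+1) → ZMod 4) :
    chChi a (entL c ++ lvL c) 0 = chi2 c a := by
  rw [chChi_append, chSh_entL, zero_add]
  unfold chi2
  ring

lemma seg1_lemma (c : Fin k → ZMod 4)
    {V A C : (Fin (k+1) → ZMod 12) → ZMod 12}
    (hV : InClo (k+1) V) (hval : ∀ x, V x = A x + 4 * C x)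
    (hsh : ∀ x, pi4 (A x) = 0) :
    InClo (k+1) (fun x => (A x + (4 * x 0 + segLin x)) + 4 * (C x + chi1 c (sh x))) := by
  have hok : ∀ p ∈ entL c ++ (loopL ++ lvL c), okJ p.2 := by
    intro p hp
    rcases List.mem_append.1 hp with h | h
    · exact entL_ok c p h
    · rcases List.mem_append.1 h with h | h
      · exact loopL_ok p h
      · exact lvL_ok c p h
  have hch := chain (n := k+1) (entL c ++ (loopL ++ lvL c)) hok (S := fun _ => 0) hV hval
    (fun x => hsh x)
  refine transport hch (fun x => ?_)
  rw [chLin_seg1, chChi_seg1]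

lemma seg2_lemma (c : Fin k → ZMod 4)
    {V A C : (Fin (k+1) → ZMod 12) → ZMod 12}
    (hV : InClo (k+1) V) (hval : ∀ x, V x = A x + 4 * C x)
    (hsh : ∀ x, pi4 (A x) = 0) :
    InClo (k+1) (fun x => (A x + segLin x) + 4 * (C x + chi2 c (sh x))) := by
  have hok : ∀ p ∈ entL c ++ lvL c, okJ p.2 := by
    intro p hp
    rcases List.mem_append.1 hp with h | h
    · exact entL_ok c p h
    · exact lvL_ok c p h
  have hch := chain (n := k+1) (entL c ++ lvL c) hok (S := fun _ => 0) hV hval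
    (fun x => hsh x)
  refine transport hch (fun x => ?_)
  rw [chLin_seg2, chChi_seg2]

end VL

namespace VL
variable {k : ℕ}

lemma pi4_4mul (z : ZMod 12) : pi4 (4 * z) = 0 := by
  rw [map_mul, show pi4 (4:ZMod 12) = 0 by decide, zero_mul]

lemma pi4_8mul (z : ZMod 12) : pi4 (8 * z) = 0 := by
  rw [map_mul, show pi4 (8:ZMod 12) = 0 by decide, zero_mul]

lemma pi4_segLin (x : Fin (k+1) → ZMod 12) : pi4 (segLin x) = 0 := by
  unfold segLin
  rw [map_sum]
  refine Finset.sum_eq_zero (fun i _ => pi4_4mul _)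

/-- total indicator contribution of one `c`: 2 × (segment with loop) + 1 × (without). -/
def Gc (c : Fin k → ZMod 4) (a : Fin (k+1) → ZMod 4) : ZMod 12 :=
  chi1 c a + chi1 c a + chi2 c a

lemma triple_lemma (c : Fin k → ZMod 4)
    {V A C : (Fin (k+1) → ZMod 12) → ZMod 12}
    (hV : InClo (k+1) V) (hval : ∀ x, V x = A x + 4 * C x)
    (hsh : ∀ x, pi4 (A x) = 0) :
    InClo (k+1) (fun x => (A x + 8 * x 0) + 4 * (C x + Gc c (sh x))) := by
  have h1 := seg1_lemma c hV hval hsh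
  have hsh1 : ∀ x, pi4 (A x + (4 * x 0 + segLin x)) = 0 := by
    intro x
    rw [map_add, map_add, hsh x, pi4_4mul, pi4_segLin]; ring
  have h2 := seg1_lemma c h1 (fun x => rfl) hsh1
  have hsh2 : ∀ x, pi4 ((A x + (4 * x 0 + segLin x)) + (4 * x 0 + segLin x)) = 0 := by
    intro x
    rw [map_add, hsh1 x, map_add, pi4_4mul, pi4_segLin]; ring
  have h3 := seg2_lemma c h2 (fun x => rfl) hsh2
  refine transport h3 (fun x => ?_)
  have h12 : (12 : ZMod 12) = 0 := by decide
  have hseg : segLin x + segLin x + segLin x = 0 := by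
    unfold segLin
    rw [← Finset.sum_add_distrib, ← Finset.sum_add_distrib]
    refine Finset.sum_eq_zero (fun i _ => ?_)
    have : (4 : ZMod 12) + 4 + 4 = 0 := by decide
    linear_combination x i.succ * this
  have h8 : (4 : ZMod 12) + 4 = 8 := by decide
  unfold Gc
  linear_combination hseg + x 0 * h8

end VL

namespace VL
variable {k : ℕ}

lemma fold_lemma (s : Finset (Fin k → ZMod 4))
    {V A C : (Fin (k+1) → ZMod 12) → ZMod 12}
    (hV : InClo (k+1) V) (hval : ∀ x, V x = A x + 4 * C x)
    (hsh : ∀ x, pi4 (A x) = 0) :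
    InClo (k+1) (fun x => (A x + 8 * (s.card : ZMod 12) * x 0)
      + 4 * (C x + ∑ c ∈ s, Gc c (sh x))) := by
  classical
  induction s using Finset.induction_on with
  | empty =>
    refine transport hV (fun x => ?_)
    rw [hval x]
    simp
  | @insert c s' hc ih =>
    have hsh' : ∀ x, pi4 (A x + 8 * (s'.card : ZMod 12) * x 0) = 0 := by
      intro x
      rw [map_add, hsh x, mul_assoc, pi4_8mul]; ring
    have h := triple_lemma c ih (fun x => rfl) hsh'
    refine transport h (fun x => ?_)
    rw [Finset.sum_insert hc, Finset.card_insert_of_notMem hc]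
    push_cast
    ring

end VL

namespace VL
variable {k : ℕ}

/-- Mod-3 count (embedded in `ZMod 12` via multiplication by 4) of solutions of
`c · b + tv = 0`. -/
lemma cnt1 : ∀ {k : ℕ} (b : Fin k → ZMod 4) (tv : ZMod 4),
    (4 : ZMod 12) * ∑ c : Fin k → ZMod 4,
        (if (∑ i, c i * b i) + tv = 0 then (1 : ZMod 12) else 0)
      = if (∀ i, b i = 0) then (if tv = 0 then 4 else 0)
        else if (∀ i, b i = 0 ∨ b i = 2) then (if tv = 0 ∨ tv = 2 then 8 else 0)
        else 4 := by
  intro k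
  induction k with
  | zero =>
    intro b tv
    rw [Fintype.sum_unique]
    simp only [Finset.univ_eq_empty, Finset.sum_empty, zero_add, IsEmpty.forall_iff, if_true]
    split_ifs <;> simp
  | succ k ih =>
    intro b tv
    have hsum : ∑ c : Fin (k+1) → ZMod 4,
        (if (∑ i, c i * b i) + tv = 0 then (1 : ZMod 12) else 0)
        = ∑ j : ZMod 4, ∑ c : Fin k → ZMod 4,
            (if (∑ i, c i * (fun i => b i.succ) i) + (j * b 0 + tv) = 0
              then (1 : ZMod 12) else 0) := by
      have hq := Fintype.sum_equiv (Fin.consEquiv (fun _ : Fin (k+1) => ZMod 4)).symm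
        (fun c : Fin (k+1) → ZMod 4 =>
          (if (∑ i, c i * b i) + tv = 0 then (1 : ZMod 12) else 0))
        (fun p : ZMod 4 × (Fin k → ZMod 4) =>
          (if (∑ i : Fin k, p.2 i * b i.succ) + (p.1 * b 0 + tv) = 0
            then (1 : ZMod 12) else 0))
        (fun c => by
          beta_reduce
          have hc : (∑ i, c i * b i) + tv
              = (∑ i : Fin k, c i.succ * b i.succ) + (c 0 * b 0 + tv) := by
            rw [Fin.sum_univ_succ]; ring
          rw [hc]
          rfl)
      rw [hq, Fintype.sum_prod_type]
    rw [hsum, Finset.mul_sum]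
    have hih : ∀ j : ZMod 4, (4 : ZMod 12) * ∑ c : Fin k → ZMod 4,
        (if (∑ i, c i * (fun i => b i.succ) i) + (j * b 0 + tv) = 0
          then (1 : ZMod 12) else 0)
        = if (∀ i : Fin k, b i.succ = 0) then (if j * b 0 + tv = 0 then 4 else 0)
          else if (∀ i : Fin k, b i.succ = 0 ∨ b i.succ = 2)
            then (if j * b 0 + tv = 0 ∨ j * b 0 + tv = 2 then 8 else 0)
          else 4 := fun j => ih (fun i => b i.succ) (j * b 0 + tv)
    rw [Finset.sum_congr rfl (fun j _ => hih j)]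
    have e1 : (∀ i : Fin (k+1), b i = 0) ↔ (b 0 = 0 ∧ ∀ i : Fin k, b i.succ = 0) :=
      Fin.forall_fin_succ
    have e2 : (∀ i : Fin (k+1), b i = 0 ∨ b i = 2)
        ↔ ((b 0 = 0 ∨ b 0 = 2) ∧ ∀ i : Fin k, b i.succ = 0 ∨ b i.succ = 2) :=
      Fin.forall_fin_succ
    simp only [e1, e2]
    clear hsum hih
    by_cases h1 : ∀ i : Fin k, b i.succ = 0
    · have h2 : ∀ i : Fin k, b i.succ = 0 ∨ b i.succ = 2 := fun i => Or.inl (h1 i)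
      simp only [eq_true h1, eq_true h2, if_true, and_true]
      generalize b 0 = β
      revert tv
      revert β
      decide
    · by_cases h2 : ∀ i : Fin k, b i.succ = 0 ∨ b i.succ = 2
      · simp only [eq_false h1, eq_true h2, if_true, if_false, and_true, and_false]
        generalize b 0 = β
        revert tv
        revert β
        decide
      · simp only [eq_false h1, eq_false h2, if_false, and_false]
        generalize b 0 = β
        revert tv
        revert β
        decide

end VL

namespace VL
variable {k : ℕ}

lemma cnt2 (b : Fin k → ZMod 4) (v : ZMod 4) (hv : v = 1 ∨ v = 3) :
    (8 : ZMod 12) * ∑ c : Fin k → ZMod 4,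
        ((if (∑ i, c i * b i) + v = 0 then (1 : ZMod 12) else 0)
          + (if (∑ i, c i * b i) = 0 then (1 : ZMod 12) else 0))
      = if (∀ i, b i = 0) then 8 else 4 := by
  rw [Finset.sum_add_distrib]
  have h1 := cnt1 b v
  have h2 := cnt1 b 0
  simp only [add_zero] at h2
  have hv0 : (if v = 0 then (4 : ZMod 12) else 0) = 0 := by
    rcases hv with rfl | rfl <;> decide
  have hv2 : (if v = 0 ∨ v = 2 then (8 : ZMod 12) else 0) = 0 := by
    rcases hv with rfl | rfl <;> decide
  by_cases hb : ∀ i, b i = 0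
  · simp only [eq_true hb, if_true] at h1 h2 ⊢
    rw [hv0] at h1
    linear_combination 2 * h1 + 2 * h2
  · simp only [eq_false hb, if_false] at h1 h2 ⊢
    by_cases hb2 : ∀ i, b i = 0 ∨ b i = 2
    · simp only [eq_true hb2, if_true] at h1 h2
      rw [hv2] at h1
      simp only [true_or, if_true] at h2
      have h16 : (16 : ZMod 12) = 4 := by decide
      linear_combination 2 * h1 + 2 * h2 + h16
    · simp only [eq_false hb2, if_false] at h1 h2
      have h16 : (16 : ZMod 12) = 4 := by decide
      linear_combination 2 * h1 + 2 * h2 + h16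

lemma ind0 : ∀ v : ZMod 4, ind4 0 v = 0 := by decide
lemma indA : ∀ u v : ZMod 4, (v = 1 ∨ v = 3) → ind4 u v = if u + v = 0 then (1:ZMod 12) else 0 := by
  decide
lemma indB : ∀ u v : ZMod 4, ¬(v = 1 ∨ v = 3) → ind4 u v = 0 := by decide

lemma G8 (c : Fin k → ZMod 4) (a : Fin (k+1) → ZMod 4) :
    (4 : ZMod 12) * Gc c a = 8 * mains c a := by
  have h12 : (12 : ZMod 12) = 0 := by decide
  unfold Gc chi1 chi2
  linear_combination (chChi a (entL c) 0 + chChi a (lvL c) (dot c a)) * h12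

def m0 (a : Fin (k+1) → ZMod 4) : ZMod 12 := ind4 (a 0) (3 * a 0)

lemma final_id (a : Fin (k+1) → ZMod 4) :
    (4 : ZMod 12) * (m0 a + m0 a + ∑ c : Fin k → ZMod 4, Gc c a)
      = if ((a 0 = 1 ∨ a 0 = 3) ∧ ∀ i : Fin k, a i.succ = 0) then 4 else 0 := by
  have key : (4 : ZMod 12) * (m0 a + m0 a + ∑ c : Fin k → ZMod 4, Gc c a)
      = 8 * m0 a + 8 * ∑ c : Fin k → ZMod 4, mains c a := by
    have hG : ∑ c : Fin k → ZMod 4, (4:ZMod 12) * Gc c a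
        = ∑ c : Fin k → ZMod 4, (8:ZMod 12) * mains c a :=
      Finset.sum_congr rfl (fun c _ => G8 c a)
    calc (4 : ZMod 12) * (m0 a + m0 a + ∑ c : Fin k → ZMod 4, Gc c a)
        = 8 * m0 a + ∑ c : Fin k → ZMod 4, (4:ZMod 12) * Gc c a := by
          rw [mul_add, mul_add, Finset.mul_sum]; ring
      _ = 8 * m0 a + ∑ c : Fin k → ZMod 4, (8:ZMod 12) * mains c a := by rw [hG]
      _ = 8 * m0 a + 8 * ∑ c : Fin k → ZMod 4, mains c a := by rw [Finset.mul_sum]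
  rw [key]
  by_cases h : a 0 = 1 ∨ a 0 = 3
  · have hm : m0 a = 1 := by
      unfold m0; rcases h with h' | h' <;> rw [h'] <;> decide
    have hmains : ∀ c : Fin k → ZMod 4, mains c a
        = (if (∑ i, c i * a i.succ) + a 0 = 0 then (1 : ZMod 12) else 0)
          + (if (∑ i, c i * a i.succ) = 0 then (1 : ZMod 12) else 0) := by
      intro c
      have h3 : (3 : ZMod 4) * a 0 = 1 ∨ (3 : ZMod 4) * a 0 = 3 := by
        rcases h with h' | h' <;> rw [h'] <;> [right; left] <;> decide
      have e2 : ((dot c a + a 0) + 3 * a 0 = 0) ↔ (dot c a = 0) := by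
        have : ∀ w z : ZMod 4, ((w + z) + 3 * z = 0) ↔ (w = 0) := by decide
        exact this _ _
      unfold mains
      rw [indA _ _ h, indA _ _ h3]
      rw [if_congr e2 rfl rfl]
      rfl
    rw [Finset.sum_congr rfl (fun c _ => hmains c)]
    rw [cnt2 (fun i => a i.succ) (a 0) h, hm]
    by_cases hb : ∀ i : Fin k, a i.succ = 0
    · rw [if_pos hb, if_pos ⟨h, hb⟩]
      decide
    · rw [if_neg hb, if_neg (fun hc => hb hc.2)]
      decide
  · have hm : m0 a = 0 := indB _ _ (by
      intro hc
      rcases hc with h' | h' <;> revert h' <;> revert h <;>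
        generalize a 0 = u <;> revert u <;> decide)
    have hmains : ∀ c : Fin k → ZMod 4, mains c a = 0 := by
      intro c
      have h3 : ¬((3 : ZMod 4) * a 0 = 1 ∨ (3 : ZMod 4) * a 0 = 3) := by
        revert h; generalize a 0 = u; revert u; decide
      unfold mains
      rw [indB _ _ h, indB _ _ h3, add_zero]
    rw [Finset.sum_congr rfl (fun c _ => hmains c), hm]
    rw [if_neg (fun hc => h hc.1)]
    simp

end VL

namespace VL
variable {k : ℕ}

instance : DecidablePred (Odd : ZMod 12 → Prop) := fun x =>
  decidable_of_iff (∃ m : ZMod 12, x = 2 * m + 1) (by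
    constructor
    · rintro ⟨m, rfl⟩; exact ⟨m, by ring⟩
    · rintro ⟨m, rfl⟩; exact ⟨m, by ring⟩)

lemma odd_iff_pi4 : ∀ z : ZMod 12, Odd z ↔ (pi4 z = 1 ∨ pi4 z = 3) := by decide

lemma mem48 (z : ZMod 12) : z ∈ ({0, 4, 8} : Set (ZMod 12)) ↔ pi4 z = 0 := by
  have h : ∀ w : ZMod 12, (w = 0 ∨ w = 4 ∨ w = 8) ↔ pi4 w = 0 := by decide
  simpa only [Set.mem_insert_iff, Set.mem_singleton_iff] using h z

lemma gfun_eq (x : Fin (k+1) → ZMod 12) :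
    gfun k x = if ((pi4 (x 0) = 1 ∨ pi4 (x 0) = 3) ∧ ∀ i : Fin k, pi4 (x i.succ) = 0)
      then 4 else 0 := by
  unfold gfun
  have hiff : (Odd (x 0) ∧ ∀ i, i ≠ 0 → x i ∈ ({0, 4, 8} : Set (ZMod 12)))
      ↔ ((pi4 (x 0) = 1 ∨ pi4 (x 0) = 3) ∧ ∀ i : Fin k, pi4 (x i.succ) = 0) := by
    refine and_congr (odd_iff_pi4 (x 0)) ?_
    constructor
    · intro H j
      exact (mem48 _).1 (H j.succ (Fin.succ_ne_zero j))
    · intro H i hi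
      obtain ⟨j, rfl⟩ := Fin.eq_succ_of_ne_zero hi
      exact (mem48 _).2 (H j)
  by_cases H : (pi4 (x 0) = 1 ∨ pi4 (x 0) = 3) ∧ ∀ i : Fin k, pi4 (x i.succ) = 0
  · rw [if_pos (hiff.2 H), if_pos H]
  · rw [if_neg (fun h => H (hiff.1 h)), if_neg H]

lemma L48 : ∀ m : ℕ, (8 : ZMod 12) * (4 : ZMod 12) ^ m = 8 := by
  intro m
  induction m with
  | zero => decide
  | succ m ih =>
    rw [pow_succ, ← mul_assoc, ih]
    decide

end VL

open VL in
theorem stmt_7 (k : ℕ) : InClo (k + 1) (gfun k) := by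
  classical
  -- initial zero term
  have h0 : InClo (k+1) (fun x : Fin (k+1) → ZMod 12 => ((0:ℕ) : ZMod 12) * x 0) :=
    leaf 0 (Or.inl rfl)
  have hl1 := chain (n := k+1) loopL loopL_ok (V := fun x => ((0:ℕ) : ZMod 12) * x 0)
    (A := fun _ => 0) (C := fun _ => 0) (S := fun _ => 0)
    h0 (fun x => by simp) (fun x => by simp)
  have hl1' : InClo (k+1) (fun x => (4 * x 0) + 4 * (m0 (sh x))) := by
    refine transport hl1 (fun x => ?_)
    beta_reduce
    rw [chLin_loopL, chChi_loopL, ind0, zero_add, zero_add, zero_add]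
    unfold m0
    ring
  have hl2 := chain (n := k+1) loopL loopL_ok (V := fun x => (4 * x 0) + 4 * (m0 (sh x)))
    (A := fun x => 4 * x 0) (C := fun x => m0 (sh x)) (S := fun _ => 0)
    hl1' (fun x => rfl) (fun x => pi4_4mul _)
  have hl2' : InClo (k+1) (fun x => (8 * x 0) + 4 * (m0 (sh x) + m0 (sh x))) := by
    refine transport hl2 (fun x => ?_)
    beta_reduce
    rw [chLin_loopL, chChi_loopL, ind0, zero_add]
    unfold m0
    ring
  have hf := fold_lemma (Finset.univ : Finset (Fin k → ZMod 4))
    (V := fun x => (8 * x 0) + 4 * (m0 (sh x) + m0 (sh x)))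
    (A := fun x => 8 * x 0) (C := fun x => m0 (sh x) + m0 (sh x))
    hl2' (fun x => rfl) (fun x => pi4_8mul _)
  have hok8 : ∀ p ∈ ([((0 : Fin (k+1)), (8:ℕ))] : List (Fin (k+1) × ℕ)), okJ p.2 := by
    intro p hp
    simp only [List.mem_singleton] at hp
    subst hp
    unfold okJ; omega
  have hcl := chain (n := k+1) [((0 : Fin (k+1)), (8:ℕ))] hok8
    (V := fun x => (8 * x 0 + 8 * ((Finset.univ : Finset (Fin k → ZMod 4)).card : ZMod 12) * x 0)
      + 4 * ((m0 (sh x) + m0 (sh x)) + ∑ c : Fin k → ZMod 4, Gc c (sh x)))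
    (A := fun x => 8 * x 0 + 8 * ((Finset.univ : Finset (Fin k → ZMod 4)).card : ZMod 12) * x 0)
    (C := fun x => (m0 (sh x) + m0 (sh x)) + ∑ c : Fin k → ZMod 4, Gc c (sh x))
    (S := fun _ => 0)
    hf (fun x => rfl)
    (fun x => by rw [map_add, pi4_8mul, mul_assoc, pi4_8mul]; ring)
  refine transport hcl (fun x => ?_)
  beta_reduce
  -- compute the chain pieces of the cleanup leaf
  have hchLin : chLin [((0 : Fin (k+1)), (8:ℕ))] x = 8 * x 0 := by
    simp [chLin]
  have hchChi : chChi (sh x) [((0 : Fin (k+1)), (8:ℕ))] 0 = 0 := by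
    simp [chChi, ind0]
  rw [hchLin, hchChi, add_zero]
  -- linear part vanishes
  have hcard : ((Finset.univ : Finset (Fin k → ZMod 4)).card : ZMod 12) = (4 : ZMod 12)^k := by
    rw [Finset.card_univ]
    rw [show Fintype.card (Fin k → ZMod 4) = 4 ^ k by
      rw [Fintype.card_fun]; simp]
    push_cast
    ring
  have hlin : (8 * x 0 + 8 * ((Finset.univ : Finset (Fin k → ZMod 4)).card : ZMod 12) * x 0)
      + 8 * x 0 = 0 := by
    rw [hcard, L48]
    have h24 : (8 : ZMod 12) + 8 + 8 = 0 := by decide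
    linear_combination x 0 * h24
  rw [gfun_eq]
  have hfin : (4 : ZMod 12) * (m0 (sh x) + m0 (sh x) + ∑ c : Fin k → ZMod 4, Gc c (sh x))
      = if ((pi4 (x 0) = 1 ∨ pi4 (x 0) = 3) ∧ ∀ i : Fin k, pi4 (x i.succ) = 0) then 4 else 0 :=
    final_id (k := k) (sh x)
  linear_combination hfin + hlin
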